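/- The partial trace does not increase the trace norm: for every complex matrix M indexed by (m × n) × (m × n), ‖Tr₂ M‖₁ ≤ ‖M‖₁, where Tr₂ M is the partial trace of M over the second tensor factor. -/

import Mathlib

open Matrix
open scoped ComplexOrder

/-- The trace norm of a complex square matrix: the trace of the positive
semidefinite square root of `Aᴴ * A`. -/
noncomputable def traceNorm {d : Type*} [Fintype d] [DecidableEq d] (A : Matrix d d ℂ) : ℝ :=
  (((((Matrix.posSemidef_conjTranspose_mul_self A).1.eigenvectorUnitary : Matrix d d ℂ) *
      diagonal (((↑) : ℝ → ℂ) ∘ Real.sqrt ∘ (Matrix.posSemidef_conjTranspose_mul_self A).1.eigenvalues) *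
      (star (Matrix.posSemidef_conjTranspose_mul_self A).1.eigenvectorUnitary : Matrix d d ℂ))).trace).re

/-- Partial trace over the second tensor factor. -/
noncomputable def ptrace2 {m n : Type*} [Fintype n] (M : Matrix (m × n) (m × n) ℂ) :
    Matrix m m ℂ :=
  Matrix.of fun i j => ∑ k, M (i, k) (j, k)

open Kronecker

section Aux

set_option linter.unusedSectionVars false
set_option maxHeartbeats 1000000

variable {d : Type*} [Fintype d] [DecidableEq d]

/-- Cauchy–Schwarz for the complex dot product. -/
lemma TNaux.cs_dot (x y : d → ℂ) : ‖dotProduct (star x) y‖ ≤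
    Real.sqrt (dotProduct (star x) x).re * Real.sqrt (dotProduct (star y) y).re := by
  have h := norm_inner_le_norm (𝕜 := ℂ) (WithLp.toLp 2 x)
    (WithLp.toLp 2 y)
  rw [EuclideanSpace.inner_toLp_toLp, dotProduct_comm] at h
  refine h.trans_eq ?_
  rw [@norm_eq_sqrt_re_inner ℂ, @norm_eq_sqrt_re_inner ℂ, EuclideanSpace.inner_toLp_toLp,
    EuclideanSpace.inner_toLp_toLp, dotProduct_comm x, dotProduct_comm y]
  simp [RCLike.re_to_complex]

lemma TNaux.dot_shift (X : Matrix d d ℂ) (v w : d → ℂ) :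
    dotProduct (star v) (X *ᵥ w) = dotProduct (star (Xᴴ *ᵥ v)) w := by
  rw [Matrix.star_mulVec, Matrix.conjTranspose_conjTranspose, dotProduct_mulVec]

/-- The trace of the square root of `MᴴM` is the sum of the square roots of eigenvalues. -/
lemma TNaux.sqrt_trace_eq (M : Matrix d d ℂ) :
    (((Matrix.posSemidef_conjTranspose_mul_self M).1.eigenvectorUnitary : Matrix d d ℂ) *
        diagonal (((↑) : ℝ → ℂ) ∘ Real.sqrt ∘ (Matrix.posSemidef_conjTranspose_mul_self M).1.eigenvalues) *
        (star (Matrix.posSemidef_conjTranspose_mul_self M).1.eigenvectorUnitary : Matrix d d ℂ)).trace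
      = ∑ i, (Real.sqrt ((Matrix.posSemidef_conjTranspose_mul_self M).1.eigenvalues i) : ℂ) := by
  rw [Matrix.trace_mul_cycle]
  rw [Matrix.mem_unitaryGroup_iff'.mp (Matrix.IsHermitian.eigenvectorUnitary _).2]
  simp [Matrix.trace_diagonal]

lemma TNaux.traceNorm_eq (M : Matrix d d ℂ) :
    traceNorm M = ∑ i, Real.sqrt ((Matrix.posSemidef_conjTranspose_mul_self M).1.eigenvalues i) := by
  rw [traceNorm, TNaux.sqrt_trace_eq, Complex.re_sum]
  simp

/-- Duality bound: for a contraction `X`, `Re tr (X * M) ≤ ∑ √λᵢ(MᴴM)`. -/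
lemma TNaux.re_trace_mul_le (M X : Matrix d d ℂ) (hX : (1 - X * Xᴴ).PosSemidef) :
    (Matrix.trace (X * M)).re
      ≤ ∑ i, Real.sqrt ((Matrix.posSemidef_conjTranspose_mul_self M).1.eigenvalues i) := by
  set hH := (Matrix.posSemidef_conjTranspose_mul_self M).1 with hHdef
  set V : Matrix d d ℂ := (hH.eigenvectorUnitary : Matrix d d ℂ) with hV
  have hVmem := (hH.eigenvectorUnitary).2
  have h1 : Matrix.trace (X * M) = Matrix.trace (Vᴴ * (X * M) * V) := by
    rw [Matrix.trace_mul_cycle, ← Matrix.mul_assoc]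
    rw [show V * Vᴴ = 1 from Matrix.mem_unitaryGroup_iff.mp hVmem, one_mul]
  have h2 : ∀ i : d, (Vᴴ * (X * M) * V) i i
      = dotProduct (star (hH.eigenvectorBasis i : d → ℂ))
          ((X * M) *ᵥ (hH.eigenvectorBasis i : d → ℂ)) := by
    intro i
    simp only [Matrix.mul_apply, dotProduct, Matrix.mulVec, Matrix.conjTranspose_apply,
      dotProduct, Pi.star_apply, Finset.mul_sum, Finset.sum_mul]
    rw [Finset.sum_comm]
    refine Finset.sum_congr rfl fun a _ => Finset.sum_congr rfl fun b _ => ?_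
    rw [show V a i = (hH.eigenvectorBasis i : d → ℂ) a from rfl,
      show V b i = (hH.eigenvectorBasis i : d → ℂ) b from rfl]
    exact Finset.sum_congr rfl fun c _ => by ring
  rw [h1, Matrix.trace, Complex.re_sum]
  refine Finset.sum_le_sum fun i _ => ?_
  rw [Matrix.diag_apply, h2 i]
  set v : d → ℂ := (hH.eigenvectorBasis i : d → ℂ) with hv
  rw [← Matrix.mulVec_mulVec, TNaux.dot_shift]
  refine le_trans (Complex.re_le_norm _) ?_
  refine le_trans (TNaux.cs_dot _ _) ?_
  have hvv : dotProduct (star v) v = 1 := by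
    have := orthonormal_iff_ite.mp hH.eigenvectorBasis.orthonormal i i
    rw [EuclideanSpace.inner_eq_star_dotProduct, dotProduct_comm] at this
    simpa using this
  have hb : (dotProduct (star (M *ᵥ v)) (M *ᵥ v)).re = hH.eigenvalues i := by
    have hvec : (Mᴴ * M) *ᵥ v = hH.eigenvalues i • v :=
      Matrix.IsHermitian.mulVec_eigenvectorBasis hH i
    rw [Matrix.star_mulVec, ← dotProduct_mulVec, Matrix.mulVec_mulVec, hvec]
    have : star v ⬝ᵥ (hH.eigenvalues i • v) = (hH.eigenvalues i : ℂ) * (star v ⬝ᵥ v) := by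
      simp only [dotProduct, Finset.mul_sum, Pi.smul_apply, Complex.real_smul,
        Pi.star_apply, smul_eq_mul]
      exact Finset.sum_congr rfl fun _ _ => by ring
    rw [this, hvv, mul_one, Complex.ofReal_re]
  have ha : (dotProduct (star (Xᴴ *ᵥ v)) (Xᴴ *ᵥ v)).re ≤ 1 := by
    have h0 := hX.dotProduct_mulVec_nonneg v
    rw [Matrix.sub_mulVec, dotProduct_sub, sub_nonneg, Matrix.one_mulVec] at h0
    have h0' : (star v ⬝ᵥ (X * Xᴴ) *ᵥ v).re ≤ (star v ⬝ᵥ v).re := (Complex.le_def.mp h0).1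
    have : star (Xᴴ *ᵥ v) ⬝ᵥ (Xᴴ *ᵥ v) = star v ⬝ᵥ ((X * Xᴴ) *ᵥ v) := by
      rw [← TNaux.dot_shift, Matrix.mulVec_mulVec]
    rw [this]
    refine h0'.trans ?_
    rw [hvv]; norm_num
  rw [hb]
  calc Real.sqrt (star (Xᴴ *ᵥ v) ⬝ᵥ Xᴴ *ᵥ v).re * Real.sqrt (hH.eigenvalues i)
      ≤ 1 * Real.sqrt (hH.eigenvalues i) := by
        gcongr
        exact Real.sqrt_le_one.mpr ha
    _ = Real.sqrt (hH.eigenvalues i) := one_mul _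

/-- Polar-type decomposition: a contraction `W` with `Wᴴ * B = √(BᴴB)`. -/
lemma TNaux.exists_contraction (B : Matrix d d ℂ) :
    ∃ W : Matrix d d ℂ, (1 - Wᴴ * W).PosSemidef ∧
      Wᴴ * B = (((Matrix.posSemidef_conjTranspose_mul_self B).1.eigenvectorUnitary : Matrix d d ℂ) *
        diagonal (((↑) : ℝ → ℂ) ∘ Real.sqrt ∘ (Matrix.posSemidef_conjTranspose_mul_self B).1.eigenvalues) *
        (star (Matrix.posSemidef_conjTranspose_mul_self B).1.eigenvectorUnitary : Matrix d d ℂ)) := by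
  set hB := Matrix.posSemidef_conjTranspose_mul_self B with hBdef
  set hH := hB.1 with hHdef
  set U : Matrix d d ℂ := (hH.eigenvectorUnitary : Matrix d d ℂ) with hU
  set lam := hH.eigenvalues with hlam
  have hUU : Uᴴ * U = 1 := Matrix.mem_unitaryGroup_iff'.mp (hH.eigenvectorUnitary).2
  have hUUt : U * Uᴴ = 1 := Matrix.mem_unitaryGroup_iff.mp (hH.eigenvectorUnitary).2
  set G : Matrix d d ℂ := Matrix.diagonal (fun i => (((Real.sqrt (lam i))⁻¹ : ℝ) : ℂ)) with hG
  have hGH : Gᴴ = G := by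
    rw [hG, Matrix.diagonal_conjTranspose,
      show (star fun i => (((Real.sqrt (lam i))⁻¹ : ℝ) : ℂ))
          = fun i => (((Real.sqrt (lam i))⁻¹ : ℝ) : ℂ)
        from funext fun i => Complex.conj_ofReal _]
  set W : Matrix d d ℂ := B * (U * G * Uᴴ) with hW
  have hWH : Wᴴ = U * G * Uᴴ * Bᴴ := by
    rw [hW, Matrix.conjTranspose_mul, Matrix.conjTranspose_mul, Matrix.conjTranspose_mul,
      Matrix.conjTranspose_conjTranspose, hGH]
    simp only [Matrix.mul_assoc]
  have hspec : Bᴴ * B = U * Matrix.diagonal ((↑) ∘ lam) * Uᴴ := by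
    conv_lhs => rw [hH.spectral_theorem]
    rfl
  have key : ∀ (E F : Matrix d d ℂ), (U * E * Uᴴ) * (U * F * Uᴴ) = U * (E * F) * Uᴴ := by
    intro E F
    calc (U * E * Uᴴ) * (U * F * Uᴴ)
        = U * E * (Uᴴ * U) * F * Uᴴ := by simp only [Matrix.mul_assoc]
      _ = U * (E * F) * Uᴴ := by rw [hUU]; simp only [Matrix.mul_assoc, Matrix.mul_one]
  have hWB : Wᴴ * B = U * Matrix.diagonal (fun i => ((Real.sqrt (lam i) : ℝ) : ℂ)) * Uᴴ := by
    rw [hWH]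
    simp only [Matrix.mul_assoc]
    rw [hspec]
    simp only [Matrix.mul_assoc]
    rw [← Matrix.mul_assoc Uᴴ U, hUU, Matrix.one_mul, ← Matrix.mul_assoc G,
      Matrix.diagonal_mul_diagonal]
    simp only [← Matrix.mul_assoc]
    have hfun : (fun i => ((((Real.sqrt (lam i))⁻¹ : ℝ) : ℂ)) * (Complex.ofReal ∘ lam) i)
        = fun i => ((Real.sqrt (lam i) : ℝ) : ℂ) := by
      funext i
      show (((Real.sqrt (lam i))⁻¹ : ℝ) : ℂ) * ((lam i : ℝ) : ℂ) = _
      rw [← Complex.ofReal_mul]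
      congr 1
      rw [inv_mul_eq_div, Real.div_sqrt]
    rw [hfun]
  have hWW : Wᴴ * W = U * Matrix.diagonal
      (fun i => ((Real.sqrt (lam i) : ℝ) : ℂ) * (((Real.sqrt (lam i))⁻¹ : ℝ) : ℂ)) * Uᴴ := by
    have h5 : Wᴴ * W = (Wᴴ * B) * (U * G * Uᴴ) := by
      rw [Matrix.mul_assoc, ← hW]
    rw [h5, hWB, key, hG, Matrix.diagonal_mul_diagonal]
  refine ⟨W, ?_, ?_⟩
  · have h1 : (1 : Matrix d d ℂ) - Wᴴ * W = U * Matrix.diagonal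
        (fun i => 1 - ((Real.sqrt (lam i) : ℝ) : ℂ) * (((Real.sqrt (lam i))⁻¹ : ℝ) : ℂ)) * Uᴴ := by
      rw [hWW, show (1 : Matrix d d ℂ) = U * 1 * Uᴴ by rw [Matrix.mul_one, hUUt],
        ← Matrix.sub_mul, ← Matrix.mul_sub]
      congr 2
      rw [← Matrix.diagonal_one, Matrix.diagonal_sub]
    rw [h1]
    refine Matrix.PosSemidef.mul_mul_conjTranspose_same (Matrix.PosSemidef.diagonal ?_) U
    rw [Pi.le_def]
    intro i
    simp only [Pi.zero_apply]
    by_cases h : Real.sqrt (lam i) = 0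
    · simp [h]
    · rw [← Complex.ofReal_mul, mul_inv_cancel₀ h]
      norm_num
  · rw [hWB]
    rfl

end Aux

section Kron

set_option linter.unusedSectionVars false
set_option maxHeartbeats 1000000

variable {m n : Type*} [Fintype m] [DecidableEq m] [Fintype n] [DecidableEq n]

lemma TNaux.kron_ct (A : Matrix m m ℂ) :
    (A ⊗ₖ (1 : Matrix n n ℂ))ᴴ = Aᴴ ⊗ₖ (1 : Matrix n n ℂ) := by
  ext ⟨i, k⟩ ⟨j, l⟩
  by_cases h : k = l <;>
    simp [Matrix.conjTranspose_apply, Matrix.one_apply, h, eq_comm]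

lemma TNaux.sub_kron (A B : Matrix m m ℂ) :
    (A - B) ⊗ₖ (1 : Matrix n n ℂ) = A ⊗ₖ (1 : Matrix n n ℂ) - B ⊗ₖ (1 : Matrix n n ℂ) := by
  ext ⟨i, k⟩ ⟨j, l⟩
  simp [Matrix.kroneckerMap_apply, sub_mul]

lemma TNaux.kron_psd {C : Matrix m m ℂ} (hC : C.PosSemidef) :
    (C ⊗ₖ (1 : Matrix n n ℂ)).PosSemidef := by
  exact hC.kronecker Matrix.PosSemidef.one

lemma TNaux.trace_kron_mul (W : Matrix m m ℂ) (M : Matrix (m × n) (m × n) ℂ) :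
    Matrix.trace ((W ⊗ₖ (1 : Matrix n n ℂ)) * M) = Matrix.trace (W * ptrace2 M) := by
  simp only [Matrix.trace, Matrix.diag_apply, Matrix.mul_apply, ptrace2, Matrix.of_apply,
    Matrix.kroneckerMap_apply, Matrix.one_apply, Fintype.sum_prod_type, mul_ite, mul_one,
    mul_zero, ite_mul, zero_mul, Finset.sum_ite_eq, Finset.mem_univ, if_true, Finset.mul_sum]
  exact Finset.sum_congr rfl fun i _ => Finset.sum_comm

end Kron

/-- The partial trace does not increase the trace norm. -/
theorem traceNorm_ptrace2_le {m n : Type*} [Fintype m] [DecidableEq m]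
    [Fintype n] [DecidableEq n] (M : Matrix (m × n) (m × n) ℂ) :
    traceNorm (ptrace2 M) ≤ traceNorm M := by
  obtain ⟨W, hC, hS⟩ := TNaux.exists_contraction (ptrace2 M)
  set X : Matrix (m × n) (m × n) ℂ := Wᴴ ⊗ₖ (1 : Matrix n n ℂ) with hX
  have hXc : (1 - X * Xᴴ).PosSemidef := by
    have h1 : X * Xᴴ = (Wᴴ * W) ⊗ₖ (1 : Matrix n n ℂ) := by
      rw [hX, TNaux.kron_ct, Matrix.conjTranspose_conjTranspose, ← Matrix.mul_kronecker_mul,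
        Matrix.one_mul]
    rw [h1, show (1 : Matrix (m × n) (m × n) ℂ) = (1 : Matrix m m ℂ) ⊗ₖ (1 : Matrix n n ℂ) from
      (Matrix.one_kronecker_one).symm, ← TNaux.sub_kron]
    exact TNaux.kron_psd hC
  have hval : traceNorm (ptrace2 M) = (Matrix.trace (X * M)).re := by
    rw [traceNorm, ← hS, ← TNaux.trace_kron_mul]
  rw [hval, TNaux.traceNorm_eq]
  exact TNaux.re_trace_mul_le M X hXc
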